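/- Suffix and superword abstractions are incomparable: there exist a finite set P = {A, B, C}, and three 'branching points' y₁, y₂, y₃ each with two outgoing trajectories encoded as words over P, such that the superword abstractions satisfy Sup(y₁) = Sup(y₂) ≠ Sup(y₃) while the suffix abstractions (sets of trajectory words) satisfy Suf(y₁) = Suf(y₃) ≠ Suf(y₂). Concretely: y₁ has trajectories with words ABCB and ACBC where the pieces alternate synchronously in time (B and C occupy the same time intervals in opposite order), y₂ has trajectories AB and AC, and y₃ has trajectories ABCB and ACBC with time-shifted alternation; then Suf(y₁) = Suf(y₃) = {ABCB, ACBC}, Suf(y₂) = {AB, AC}, Sup(y₁) = Sup(y₂) = {A}{B,C}, and Sup(y₃) = {A}{B,C}{B}{B,C}{C}{B,C}. -/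

import Mathlib

/-- The three pieces `A`, `B`, `C`. -/
notation "Pc" => Fin 3

def pA : Pc := 0
def pB : Pc := 1
def pC : Pc := 2

/-- `RepWord f w`: the (reduced) word of the piecewise-constant function
`f : ℝ≥0 → α` is `w`: adjacent letters of `w` are distinct, and there are breakpoints
`0 = b 0 < b 1 < … ` such that `f` equals the `i`-th letter of `w` on `[b i, b (i+1))`
(and on `[b (last), ∞)` for the last letter). -/
def RepWord {α : Type*} (f : ℝ → α) (w : List α) : Prop :=
  w ≠ [] ∧ w.Chain' (· ≠ ·) ∧
  ∃ b : ℕ → ℝ, b 0 = 0 ∧ (∀ i : ℕ, i + 1 < w.length → b i < b (i + 1)) ∧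
    ∀ i : ℕ, ∀ h : i < w.length, ∀ τ : ℝ, b i ≤ τ →
      (i + 1 = w.length ∨ τ < b (i + 1)) → f τ = w.get ⟨i, h⟩

/-- first trajectory of `y₁` (and of `y₃`): `A` on `[0,1)`, `B` on `[1,2)`, `C` on
`[2,3)`, `B` on `[3,∞)`. -/
noncomputable def f₁ (τ : ℝ) : Pc :=
  if τ < 1 then pA else if τ < 2 then pB else if τ < 3 then pC else pB

/-- second trajectory of `y₁`: `A`, then `C`, `B`, `C` synchronously with `f₁`. -/
noncomputable def g₁ (τ : ℝ) : Pc :=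
  if τ < 1 then pA else if τ < 2 then pC else if τ < 3 then pB else pC

/-- trajectories of `y₂`. -/
noncomputable def f₂ (τ : ℝ) : Pc := if τ < 1 then pA else pB
noncomputable def g₂ (τ : ℝ) : Pc := if τ < 1 then pA else pC

/-- second trajectory of `y₃`: time-shifted alternation `A`, `C` on `[1,3/2)`, `B` on
`[3/2,5/2)`, `C` on `[5/2,∞)`. -/
noncomputable def g₃ (τ : ℝ) : Pc :=
  if τ < 1 then pA else if τ < 3/2 then pC else if τ < 5/2 then pB else pC


lemma set_pA_ne : ({pA} : Set Pc) ≠ {pB, pC} := by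
  intro h
  have : pA ∈ ({pB, pC} : Set Pc) := h ▸ Set.mem_singleton pA
  simp only [Set.mem_insert_iff, Set.mem_singleton_iff, pA, pB, pC] at this
  rcases this with h | h <;> exact absurd h (by decide)

lemma set_BC_ne_B : ({pB, pC} : Set Pc) ≠ {pB} := by
  intro h
  have : pC ∈ ({pB} : Set Pc) := h ▸ (by simp : pC ∈ ({pB, pC} : Set Pc))
  simp only [Set.mem_singleton_iff, pB, pC] at this
  exact absurd this (by decide)

lemma set_BC_ne_C : ({pB, pC} : Set Pc) ≠ {pC} := by
  intro h
  have : pB ∈ ({pC} : Set Pc) := h ▸ (by simp : pB ∈ ({pB, pC} : Set Pc))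
  simp only [Set.mem_singleton_iff, pB, pC] at this
  exact absurd this (by decide)

lemma set_B_ne_C : ({pB} : Set Pc) ≠ ({pC} : Set Pc) := by
  intro h
  have : pB ∈ ({pC} : Set Pc) := h ▸ Set.mem_singleton pB
  simp only [Set.mem_singleton_iff, pB, pC] at this
  exact absurd this (by decide)

/-- the suffix and superword abstractions are incomparable.  With the
branching points `y₁ = (f₁, g₁)`, `y₂ = (f₂, g₂)`, `y₃ = (f₁, g₃)`: the suffix
abstractions (sets of reduced trajectory words) satisfy
`Suf(y₁) = Suf(y₃) = {ABCB, ACBC} ≠ {AB, AC} = Suf(y₂)`, while the superword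
abstractions (reduced word of `τ ↦ {f τ, g τ}`) satisfy
`Sup(y₁) = Sup(y₂) = {A}{B,C} ≠ {A}{B,C}{B}{B,C}{C}{B,C} = Sup(y₃)`. -/
theorem suffix_superword_incomparable :
    -- suffix abstractions
    RepWord f₁ [pA, pB, pC, pB] ∧ RepWord g₁ [pA, pC, pB, pC] ∧
    RepWord f₂ [pA, pB] ∧ RepWord g₂ [pA, pC] ∧ RepWord g₃ [pA, pC, pB, pC] ∧
    -- Suf(y₁) = Suf(y₃) ≠ Suf(y₂)
    ({[pA, pB, pC, pB], [pA, pC, pB, pC]} : Set (List Pc))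
        ≠ {[pA, pB], [pA, pC]} ∧
    -- superword abstractions
    RepWord (fun τ => ({f₁ τ, g₁ τ} : Set Pc)) [{pA}, {pB, pC}] ∧
    RepWord (fun τ => ({f₂ τ, g₂ τ} : Set Pc)) [{pA}, {pB, pC}] ∧
    RepWord (fun τ => ({f₁ τ, g₃ τ} : Set Pc))
        [{pA}, {pB, pC}, {pB}, {pB, pC}, {pC}, {pB, pC}] ∧
    -- Sup(y₁) = Sup(y₂) ≠ Sup(y₃)
    ([{pA}, {pB, pC}] : List (Set Pc))
        ≠ [{pA}, {pB, pC}, {pB}, {pB, pC}, {pC}, {pB, pC}] := by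
  refine ⟨?_, ?_, ?_, ?_, ?_, ?_, ?_, ?_, ?_, ?_⟩
  · -- f₁
    refine ⟨by simp, by simp only [List.Chain', List.isChain_cons_cons, List.isChain_singleton, and_true]; decide, fun i => (i : ℝ), by norm_num,
      fun i _ => by push_cast; linarith, ?_⟩
    intro i h τ h1 h2
    have hb : i < 4 := by simpa using h
    interval_cases i <;>
      [ (obtain h2 | h2 := h2; · simp at h2);
        (obtain h2 | h2 := h2; · simp at h2);
        (obtain h2 | h2 := h2; · simp at h2);
        skip ] <;>
      norm_num at h1 h2 ⊢ <;>
      simp only [f₁] <;> split_ifs <;> first | rfl | (exfalso; linarith)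
  · -- g₁
    refine ⟨by simp, by simp only [List.Chain', List.isChain_cons_cons, List.isChain_singleton, and_true]; decide, fun i => (i : ℝ), by norm_num,
      fun i _ => by push_cast; linarith, ?_⟩
    intro i h τ h1 h2
    have hb : i < 4 := by simpa using h
    interval_cases i <;>
      [ (obtain h2 | h2 := h2; · simp at h2);
        (obtain h2 | h2 := h2; · simp at h2);
        (obtain h2 | h2 := h2; · simp at h2);
        skip ] <;>
      norm_num at h1 h2 ⊢ <;>
      simp only [g₁] <;> split_ifs <;> first | rfl | (exfalso; linarith)
  · -- f₂
    refine ⟨by simp, by simp only [List.Chain', List.isChain_cons_cons, List.isChain_singleton, and_true]; decide, fun i => (i : ℝ), by norm_num,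
      fun i _ => by push_cast; linarith, ?_⟩
    intro i h τ h1 h2
    have hb : i < 2 := by simpa using h
    interval_cases i <;>
      [ (obtain h2 | h2 := h2; · simp at h2); skip ] <;>
      norm_num at h1 h2 ⊢ <;>
      simp only [f₂] <;> split_ifs <;> first | rfl | (exfalso; linarith)
  · -- g₂
    refine ⟨by simp, by simp only [List.Chain', List.isChain_cons_cons, List.isChain_singleton, and_true]; decide, fun i => (i : ℝ), by norm_num,
      fun i _ => by push_cast; linarith, ?_⟩
    intro i h τ h1 h2
    have hb : i < 2 := by simpa using h
    interval_cases i <;>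
      [ (obtain h2 | h2 := h2; · simp at h2); skip ] <;>
      norm_num at h1 h2 ⊢ <;>
      simp only [g₂] <;> split_ifs <;> first | rfl | (exfalso; linarith)
  · -- g₃
    refine ⟨by simp, by simp only [List.Chain', List.isChain_cons_cons, List.isChain_singleton, and_true]; decide,
      fun i => if i = 0 then 0 else if i = 1 then 1 else if i = 2 then 3/2 else 5/2,
      by norm_num, ?_, ?_⟩
    · intro i hi
      have hb : i < 3 := by simp only [List.length_cons, List.length_nil] at hi; omega
      interval_cases i <;> norm_num
    · intro i h τ h1 h2
      have hb : i < 4 := by simpa using h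
      interval_cases i <;>
        [ (obtain h2 | h2 := h2; · simp at h2);
          (obtain h2 | h2 := h2; · simp at h2);
          (obtain h2 | h2 := h2; · simp at h2);
          skip ] <;>
        norm_num at h1 h2 ⊢ <;>
        simp only [g₃] <;> split_ifs <;> first | rfl | (exfalso; linarith)
  · -- Suf inequality
    intro h
    have : ([pA, pB, pC, pB] : List Pc) ∈
        ({[pA, pB], [pA, pC]} : Set (List Pc)) := h ▸ (by simp)
    simp only [Set.mem_insert_iff, Set.mem_singleton_iff] at this
    rcases this with h' | h' <;> exact absurd h' (by decide)
  · -- Sup y₁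
    refine ⟨by simp, List.isChain_pair.mpr set_pA_ne, fun i => (i : ℝ), by norm_num,
      fun i _ => by push_cast; linarith, ?_⟩
    intro i h τ h1 h2
    have hb : i < 2 := by simpa using h
    interval_cases i <;>
      [ (obtain h2 | h2 := h2; · simp at h2); skip ] <;>
      norm_num at h1 h2 ⊢ <;>
      simp only [f₁, g₁] <;> split_ifs <;>
      first | (exfalso; linarith) | rfl | exact Set.pair_eq_singleton _ | exact Set.pair_comm _ _
  · -- Sup y₂
    refine ⟨by simp, List.isChain_pair.mpr set_pA_ne, fun i => (i : ℝ), by norm_num,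
      fun i _ => by push_cast; linarith, ?_⟩
    intro i h τ h1 h2
    have hb : i < 2 := by simpa using h
    interval_cases i <;>
      [ (obtain h2 | h2 := h2; · simp at h2); skip ] <;>
      norm_num at h1 h2 ⊢ <;>
      simp only [f₂, g₂] <;> split_ifs <;>
      first | (exfalso; linarith) | rfl | exact Set.pair_eq_singleton _ | exact Set.pair_comm _ _
  · -- Sup y₃
    refine ⟨by simp, ?_,
      fun i => if i = 0 then 0 else if i = 1 then 1 else if i = 2 then 3/2
        else if i = 3 then 2 else if i = 4 then 5/2 else 3,
      by norm_num, ?_, ?_⟩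
    · refine List.IsChain.cons_cons set_pA_ne (List.IsChain.cons_cons set_BC_ne_B
        (List.IsChain.cons_cons (Ne.symm set_BC_ne_B) (List.IsChain.cons_cons set_BC_ne_C
        (List.isChain_pair.mpr (Ne.symm set_BC_ne_C)))))
    · intro i hi
      have hb : i < 5 := by simp only [List.length_cons, List.length_nil] at hi; omega
      interval_cases i <;> norm_num
    · intro i h τ h1 h2
      have hb : i < 6 := by simpa using h
      interval_cases i <;>
        [ (obtain h2 | h2 := h2; · simp at h2);
          (obtain h2 | h2 := h2; · simp at h2);
          (obtain h2 | h2 := h2; · simp at h2);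
          (obtain h2 | h2 := h2; · simp at h2);
          (obtain h2 | h2 := h2; · simp at h2);
          skip ] <;>
        norm_num at h1 h2 ⊢ <;>
        simp only [f₁, g₃] <;> split_ifs <;>
        first | (exfalso; linarith) | rfl | exact Set.pair_eq_singleton _ | exact Set.pair_comm _ _
  · -- Sup inequality
    intro h
    exact absurd (congrArg List.length h) (by simp)
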